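/- For |t|<1, d/dt [ (t²/2) · G(t) ] = (t/(1−t³)) · ₂F₁(2/3,2/3;4/3;t³), where G(t) = Σ_{m,n≥0} (2/3)_{m+n}/(5/3)_{m+n} · (2/3)_n(2/3)_n/((4/3)_n) · (1)_m/(m! n!) · t^{3(n+m)}. -/

import Mathlib

open scoped BigOperators

/-- The Pochhammer symbol `(a)ₙ = a(a+1)⋯(a+n−1)`. -/
noncomputable def poch (a : ℂ) (n : ℕ) : ℂ := ∏ i ∈ Finset.range n, (a + i)

/-- The Gauss hypergeometric series `₂F₁(a,b;c;x) = Σ (a)ₙ(b)ₙ/((c)ₙ n!) xⁿ`. -/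
noncomputable def F21 (a b c x : ℂ) : ℂ :=
  ∑' n : ℕ, poch a n * poch b n / (poch c n * (n.factorial : ℂ)) * x ^ n

/-- `G(t) = Σ_{m,n≥0} (2/3)_{m+n}/(5/3)_{m+n} · (2/3)ₙ(2/3)ₙ/(4/3)ₙ · (1)ₘ/(m! n!) · t^{3(n+m)}`,
summed over `p = (m, n) : ℕ × ℕ`. -/
noncomputable def kampeG (t : ℂ) : ℂ :=
  ∑' p : ℕ × ℕ,
    poch (2/3) (p.1 + p.2) / poch (5/3) (p.1 + p.2)
      * (poch (2/3) p.2 * poch (2/3) p.2 / poch (4/3) p.2)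
      * (poch 1 p.1 / ((p.1.factorial : ℂ) * (p.2.factorial : ℂ)))
      * t ^ (3 * (p.2 + p.1))

set_option maxHeartbeats 1000000

noncomputable def pochR (a : ℝ) (n : ℕ) : ℝ := ∏ i ∈ Finset.range n, (a + i)

lemma poch_eq_pochR (a : ℝ) (n : ℕ) : poch (a : ℂ) n = ((pochR a n : ℝ) : ℂ) := by
  rw [poch, pochR]; push_cast; rfl

lemma pochR_pos {a : ℝ} (ha : 0 < a) (n : ℕ) : 0 < pochR a n :=
  Finset.prod_pos fun i _ => by positivity

lemma pochR_mono {a b : ℝ} (ha : 0 ≤ a) (h : a ≤ b) (n : ℕ) : pochR a n ≤ pochR b n :=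
  Finset.prod_le_prod (fun i _ => by positivity) (fun i _ => by linarith)

lemma pochR_one (n : ℕ) : pochR 1 n = (n.factorial : ℝ) := by
  induction n with
  | zero => simp [pochR]
  | succ k ih =>
      rw [pochR, Finset.prod_range_succ, ← pochR, ih, Nat.factorial_succ]
      push_cast; ring

lemma poch_succ' (a : ℂ) (n : ℕ) : poch a (n + 1) = a * poch (a + 1) n := by
  rw [poch, Finset.prod_range_succ', poch]
  push_cast
  rw [mul_comm]
  congr 1
  · norm_num
  · exact Finset.prod_congr rfl fun i _ => by ring

lemma poch23 (n : ℕ) : poch (2/3) n = ((pochR (2/3) n : ℝ) : ℂ) := by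
  rw [show ((2:ℂ)/3) = (((2/3 : ℝ)) : ℂ) by norm_num]; exact poch_eq_pochR _ _

lemma poch43 (n : ℕ) : poch (4/3) n = ((pochR (4/3) n : ℝ) : ℂ) := by
  rw [show ((4:ℂ)/3) = (((4/3 : ℝ)) : ℂ) by norm_num]; exact poch_eq_pochR _ _

lemma poch53 (n : ℕ) : poch (5/3) n = ((pochR (5/3) n : ℝ) : ℂ) := by
  rw [show ((5:ℂ)/3) = (((5/3 : ℝ)) : ℂ) by norm_num]; exact poch_eq_pochR _ _

lemma poch_one_eq (n : ℕ) : poch 1 n = (n.factorial : ℂ) := by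
  rw [show (1:ℂ) = (((1:ℝ)) : ℂ) by norm_num, poch_eq_pochR, pochR_one]
  push_cast; rfl

lemma poch53_ne (k : ℕ) : poch (5/3) k ≠ 0 := by
  rw [poch53]
  exact_mod_cast (pochR_pos (by norm_num) k).ne'

lemma pochStep (k : ℕ) : poch (2/3) k * (3 * (k:ℂ) + 2) = 2 * poch (5/3) k := by
  have h1 : poch (2/3) (k+1) = poch (2/3) k * (2/3 + (k:ℂ)) := by
    rw [poch, Finset.prod_range_succ]; rfl
  have h2 : poch (2/3) (k+1) = (2/3) * poch (5/3) k := by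
    rw [poch_succ']; norm_num
  linear_combination 3 * (h1.symm.trans h2)

/-- the coefficient of the F21 series with a = b = 2/3, c = 4/3 -/
noncomputable def cc (n : ℕ) : ℂ :=
  poch (2/3) n * poch (2/3) n / (poch (4/3) n * (n.factorial : ℂ))

noncomputable def ccR (n : ℕ) : ℝ :=
  pochR (2/3) n * pochR (2/3) n / (pochR (4/3) n * (n.factorial : ℝ))

lemma cc_eq (n : ℕ) : cc n = ((ccR n : ℝ) : ℂ) := by
  rw [cc, ccR, poch23, poch43]; push_cast; ring

lemma ccR_mem (n : ℕ) : ccR n ∈ Set.Icc (0:ℝ) 1 := by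
  have h23 := pochR_pos (show (0:ℝ) < 2/3 by norm_num) n
  have h43 := pochR_pos (show (0:ℝ) < 4/3 by norm_num) n
  have hfac : (0:ℝ) < (n.factorial : ℝ) := by exact_mod_cast n.factorial_pos
  have hle1 : pochR (2/3) n ≤ (n.factorial : ℝ) := by
    rw [← pochR_one]; exact pochR_mono (by norm_num) (by norm_num) n
  have hle2 : pochR (2/3) n ≤ pochR (4/3) n := pochR_mono (by norm_num) (by norm_num) n
  constructor
  · rw [ccR]; positivity
  · rw [ccR, div_le_one (by positivity)]
    calc pochR (2/3) n * pochR (2/3) n ≤ pochR (4/3) n * (n.factorial : ℝ) :=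
      mul_le_mul hle2 hle1 h23.le h43.le
      _ = pochR (4/3) n * (n.factorial : ℝ) := rfl

noncomputable def AA (p : ℕ × ℕ) : ℂ :=
  (poch (2/3) (p.1 + p.2) / poch (5/3) (p.1 + p.2)
      * (poch (2/3) p.2 * poch (2/3) p.2 / poch (4/3) p.2)
      * (poch 1 p.1 / ((p.1.factorial : ℂ) * (p.2.factorial : ℂ)))) / 2

lemma AA_eq (m n : ℕ) : AA (m, n) = (((pochR (2/3) (m + n) / pochR (5/3) (m + n)
      * (pochR (2/3) n * pochR (2/3) n / pochR (4/3) n)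
      * ((m.factorial : ℝ) / ((m.factorial : ℝ) * (n.factorial : ℝ)))) / 2 : ℝ) : ℂ) := by
  rw [AA]
  simp only
  rw [poch23, poch43, poch53, poch23, poch_one_eq]
  push_cast; ring

lemma AA_norm_le (p : ℕ × ℕ) : ‖AA p‖ ≤ 1 := by
  obtain ⟨m, n⟩ := p
  rw [AA_eq, Complex.norm_real, Real.norm_eq_abs]
  have h23k := pochR_pos (show (0:ℝ) < 2/3 by norm_num) (m + n)
  have h53k := pochR_pos (show (0:ℝ) < 5/3 by norm_num) (m + n)
  have h23 := pochR_pos (show (0:ℝ) < 2/3 by norm_num) n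
  have h43 := pochR_pos (show (0:ℝ) < 4/3 by norm_num) n
  have hm : (0:ℝ) < (m.factorial : ℝ) := by exact_mod_cast m.factorial_pos
  have hn : (0:ℝ) < (n.factorial : ℝ) := by exact_mod_cast n.factorial_pos
  have h1 : pochR (2/3) (m+n) / pochR (5/3) (m+n) ≤ 1 :=
    (div_le_one h53k).mpr (pochR_mono (by norm_num) (by norm_num) _)
  have hle1 : pochR (2/3) n ≤ (n.factorial : ℝ) := by
    rw [← pochR_one]; exact pochR_mono (by norm_num) (by norm_num) n
  have hle2 : pochR (2/3) n ≤ pochR (4/3) n := pochR_mono (by norm_num) (by norm_num) n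
  have h2 : pochR (2/3) n * pochR (2/3) n / pochR (4/3) n ≤ (n.factorial : ℝ) := by
    rw [div_le_iff₀ h43]
    calc pochR (2/3) n * pochR (2/3) n ≤ pochR (4/3) n * (n.factorial : ℝ) :=
          mul_le_mul hle2 hle1 h23.le h43.le
      _ = (n.factorial : ℝ) * pochR (4/3) n := by ring
  have h3 : ((m.factorial : ℝ)) / ((m.factorial : ℝ) * (n.factorial : ℝ)) = ((n.factorial : ℝ))⁻¹ := by
    field_simp
  rw [abs_of_nonneg (by positivity), h3]
  have h4 : pochR (2/3) (m+n) / pochR (5/3) (m+n)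
      * (pochR (2/3) n * pochR (2/3) n / pochR (4/3) n) ≤ 1 * (n.factorial : ℝ) :=
    mul_le_mul h1 h2 (by positivity) (by norm_num)
  have h5 : pochR (2/3) (m+n) / pochR (5/3) (m+n)
      * (pochR (2/3) n * pochR (2/3) n / pochR (4/3) n) * ((n.factorial : ℝ))⁻¹
      ≤ (1 * (n.factorial : ℝ)) * ((n.factorial : ℝ))⁻¹ :=
    mul_le_mul_of_nonneg_right h4 (by positivity)
  have h6 : (1 * (n.factorial : ℝ)) * ((n.factorial : ℝ))⁻¹ = 1 := by
    field_simp
  linarith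

lemma key_identity (p : ℕ × ℕ) :
    AA p * ((3 * (p.2 + p.1) + 2 : ℕ) : ℂ) = cc p.2 := by
  obtain ⟨m, n⟩ := p
  have hk := pochStep (m + n)
  have h5 := poch53_ne (m + n)
  have hm : ((m.factorial : ℂ)) ≠ 0 := Nat.cast_ne_zero.mpr m.factorial_ne_zero
  have hcast : (((3 * (n + m) + 2 : ℕ)) : ℂ) = 3 * (((m + n : ℕ)) : ℂ) + 2 := by
    push_cast; ring
  have hq : poch (2/3) (m + n) / poch (5/3) (m + n) * (3 * (((m + n : ℕ)) : ℂ) + 2) / 2 = 1 := by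
    rw [div_mul_eq_mul_div, div_div, div_eq_one_iff_eq (by
      exact mul_ne_zero h5 two_ne_zero)]
    linear_combination hk
  rw [AA, cc]
  simp only
  rw [hcast, poch_one_eq]
  calc poch (2/3) (m + n) / poch (5/3) (m + n)
        * (poch (2/3) n * poch (2/3) n / poch (4/3) n)
        * ((m.factorial : ℂ) / ((m.factorial : ℂ) * (n.factorial : ℂ))) / 2
        * (3 * (((m + n : ℕ)) : ℂ) + 2)
      = (poch (2/3) (m + n) / poch (5/3) (m + n) * (3 * (((m + n : ℕ)) : ℂ) + 2) / 2)
        * ((poch (2/3) n * poch (2/3) n / poch (4/3) n)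
          * ((m.factorial : ℂ) / ((m.factorial : ℂ) * (n.factorial : ℂ)))) := by ring
    _ = (poch (2/3) n * poch (2/3) n / poch (4/3) n)
          * ((m.factorial : ℂ) / ((m.factorial : ℂ) * (n.factorial : ℂ))) := by
        rw [hq, one_mul]
    _ = poch (2/3) n * poch (2/3) n / (poch (4/3) n * (n.factorial : ℂ)) := by
        rw [div_mul_eq_div_div, div_self hm, one_div, div_mul_eq_div_div,
          div_eq_mul_inv (poch (2/3) n * poch (2/3) n / poch (4/3) n)]

set_option maxHeartbeats 1000000

lemma aux_deriv (A : ℕ × ℕ → ℂ) (hA : ∀ p, ‖A p‖ ≤ 1) {t : ℂ} (ht : ‖t‖ < 1) :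
    HasDerivAt (fun s : ℂ => ∑' p : ℕ × ℕ, A p * s ^ (3 * (p.2 + p.1) + 2))
      (∑' p : ℕ × ℕ, A p * ((3 * (p.2 + p.1) + 2 : ℕ) : ℂ) * t ^ (3 * (p.2 + p.1) + 1)) t := by
  set r : ℝ := (1 + ‖t‖) / 2 with hrdef
  have h0t : (0:ℝ) ≤ ‖t‖ := norm_nonneg t
  have htr : ‖t‖ < r := by rw [hrdef]; linarith
  have hr1 : r < 1 := by rw [hrdef]; linarith
  have hr0 : (0:ℝ) ≤ r := by positivity
  have hr3 : r ^ 3 < 1 := pow_lt_one₀ hr0 hr1 (by norm_num)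
  have hr30 : (0:ℝ) ≤ r ^ 3 := by positivity
  -- summability of the majorant for derivatives
  have hg : Summable (fun m : ℕ => (3 * (m:ℝ) + 2) * r ^ (3 * m)) := by
    have h1 : Summable (fun m : ℕ => (m : ℝ) * (r ^ 3) ^ m) := by
      simpa using summable_pow_mul_geometric_of_norm_lt_one 1
        (r := r ^ 3) (by rwa [Real.norm_of_nonneg hr30])
    have h2 : Summable (fun m : ℕ => (r ^ 3) ^ m) := summable_geometric_of_lt_one hr30 hr3
    have h3 := (h1.mul_left 3).add (h2.mul_left 2)
    refine h3.congr fun m => ?_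
    rw [← pow_mul]
    ring
  have hgnn : ∀ m : ℕ, (0:ℝ) ≤ (3 * (m:ℝ) + 2) * r ^ (3 * m) := fun m => by positivity
  have hprod : Summable (fun p : ℕ × ℕ =>
      ((3 * (p.1:ℝ) + 2) * r ^ (3 * p.1)) * ((3 * (p.2:ℝ) + 2) * r ^ (3 * p.2))) :=
    hg.mul_of_nonneg hg hgnn hgnn
  have hu : Summable (fun p : ℕ × ℕ =>
      (3 * ((p.2:ℝ) + p.1) + 2) * r ^ (3 * (p.2 + p.1) + 1)) := by
    refine Summable.of_nonneg_of_le (fun p => by positivity) (fun p => ?_) hprod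
    have e : r ^ (3 * (p.2 + p.1) + 1) = r ^ (3 * p.1) * r ^ (3 * p.2) * r := by
      rw [show 3 * (p.2 + p.1) + 1 = 3 * p.1 + 3 * p.2 + 1 by ring, pow_add, pow_add, pow_one]
    rw [e]
    have hx : (0:ℝ) ≤ r ^ (3 * p.1) := by positivity
    have hy : (0:ℝ) ≤ r ^ (3 * p.2) := by positivity
    have hx1 : r ^ (3 * p.1) ≤ 1 := pow_le_one₀ hr0 hr1.le
    have hy1 : r ^ (3 * p.2) ≤ 1 := pow_le_one₀ hr0 hr1.le
    have ha : (0:ℝ) ≤ (p.1 : ℝ) := Nat.cast_nonneg _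
    have hb : (0:ℝ) ≤ (p.2 : ℝ) := Nat.cast_nonneg _
    have hxy : (0:ℝ) ≤ r ^ (3 * p.1) * r ^ (3 * p.2) := mul_nonneg hx hy
    have hcoef : (3 * ((p.2:ℝ) + p.1) + 2) ≤ (3 * (p.1:ℝ) + 2) * (3 * (p.2:ℝ) + 2) := by
      nlinarith [mul_nonneg ha hb]
    have hcoefnn : (0:ℝ) ≤ 3 * ((p.2:ℝ) + p.1) + 2 := by positivity
    calc (3 * ((p.2:ℝ) + p.1) + 2) * (r ^ (3 * p.1) * r ^ (3 * p.2) * r)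
        ≤ (3 * ((p.2:ℝ) + p.1) + 2) * (r ^ (3 * p.1) * r ^ (3 * p.2) * 1) := by
          refine mul_le_mul_of_nonneg_left ?_ hcoefnn
          exact mul_le_mul_of_nonneg_left hr1.le hxy
      _ = (3 * ((p.2:ℝ) + p.1) + 2) * (r ^ (3 * p.1) * r ^ (3 * p.2)) := by ring
      _ ≤ ((3 * (p.1:ℝ) + 2) * (3 * (p.2:ℝ) + 2)) * (r ^ (3 * p.1) * r ^ (3 * p.2)) :=
          mul_le_mul_of_nonneg_right hcoef hxy
      _ = (3 * (p.1:ℝ) + 2) * r ^ (3 * p.1) * ((3 * (p.2:ℝ) + 2) * r ^ (3 * p.2)) := by ring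
  -- geometric product summability for pointwise convergence
  have hgeo : Summable (fun m : ℕ => r ^ (3 * m)) := by
    refine (summable_geometric_of_lt_one hr30 hr3).congr fun m => ?_
    rw [← pow_mul, mul_comm]
  have hgeoprod : Summable (fun p : ℕ × ℕ => r ^ (3 * p.1) * r ^ (3 * p.2)) :=
    hgeo.mul_of_nonneg hgeo (fun m => by positivity) (fun m => by positivity)
  have hopen : IsOpen (Metric.ball (0:ℂ) r) := Metric.isOpen_ball
  have htmem : t ∈ Metric.ball (0:ℂ) r := by
    simpa [Metric.mem_ball, dist_zero_right] using htr
  have hballnorm : ∀ x : ℂ, x ∈ Metric.ball (0:ℂ) r → ‖x‖ ≤ r := fun x hx => by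
    rw [Metric.mem_ball, dist_zero_right] at hx; exact hx.le
  refine hasDerivAt_of_tendstoUniformlyOn (l := (Filter.atTop : Filter (Finset (ℕ × ℕ))))
    (g := fun x : ℂ => ∑' p : ℕ × ℕ, A p * x ^ (3 * (p.2 + p.1) + 2))
    (g' := fun x : ℂ => ∑' p : ℕ × ℕ, A p * ((3 * (p.2 + p.1) + 2 : ℕ) : ℂ) * x ^ (3 * (p.2 + p.1) + 1))
    (f := fun (N : Finset (ℕ × ℕ)) (x : ℂ) =>
      ∑ p ∈ N, A p * x ^ (3 * (p.2 + p.1) + 2))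
    (f' := fun (N : Finset (ℕ × ℕ)) (x : ℂ) =>
      ∑ p ∈ N, A p * ((3 * (p.2 + p.1) + 2 : ℕ) : ℂ) * x ^ (3 * (p.2 + p.1) + 1))
    hopen ?_ ?_ ?_ htmem
  · -- uniform convergence of derivatives
    have := tendstoUniformlyOn_tsum (f := fun (p : ℕ × ℕ) (x : ℂ) =>
        A p * ((3 * (p.2 + p.1) + 2 : ℕ) : ℂ) * x ^ (3 * (p.2 + p.1) + 1)) hu
      (s := Metric.ball (0:ℂ) r) ?_
    · exact this
    · intro p x hx
      have hxr := hballnorm x hx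
      have h1 : ‖x ^ (3 * (p.2 + p.1) + 1)‖ ≤ r ^ (3 * (p.2 + p.1) + 1) := by
        rw [norm_pow]
        exact pow_le_pow_left₀ (norm_nonneg x) hxr _
      calc ‖A p * ((3 * (p.2 + p.1) + 2 : ℕ) : ℂ) * x ^ (3 * (p.2 + p.1) + 1)‖
          = ‖A p‖ * ‖((3 * (p.2 + p.1) + 2 : ℕ) : ℂ)‖ * ‖x ^ (3 * (p.2 + p.1) + 1)‖ := by
            rw [norm_mul, norm_mul]
        _ ≤ 1 * (3 * ((p.2:ℝ) + p.1) + 2) * r ^ (3 * (p.2 + p.1) + 1) := by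
            have h2 : ‖((3 * (p.2 + p.1) + 2 : ℕ) : ℂ)‖ = ((3 * (p.2 + p.1) + 2 : ℕ) : ℝ) := by
              rw [Complex.norm_natCast]
            refine mul_le_mul (mul_le_mul (hA p) ?_ (norm_nonneg _) (by norm_num)) h1
              (norm_nonneg _) (by positivity)
            exact le_of_eq (by rw [h2]; push_cast; ring)
        _ = (3 * ((p.2:ℝ) + p.1) + 2) * r ^ (3 * (p.2 + p.1) + 1) := by ring
  · -- each partial sum has the right derivative
    refine Filter.Eventually.of_forall (fun N x _ => ?_)
    refine HasDerivAt.fun_sum fun p _ => ?_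
    have h := (hasDerivAt_pow (3 * (p.2 + p.1) + 2) x).const_mul (A p)
    simpa [Nat.add_sub_cancel, mul_assoc] using h
  · -- pointwise convergence
    intro x hx
    have hxr := hballnorm x hx
    have hs : Summable (fun p : ℕ × ℕ => A p * x ^ (3 * (p.2 + p.1) + 2)) := by
      refine Summable.of_norm_bounded hgeoprod (fun p => ?_)
      have h1 : ‖x ^ (3 * (p.2 + p.1) + 2)‖ ≤ r ^ (3 * (p.2 + p.1) + 2) := by
        rw [norm_pow]; exact pow_le_pow_left₀ (norm_nonneg x) hxr _
      have h2 : r ^ (3 * (p.2 + p.1) + 2) ≤ r ^ (3 * p.1) * r ^ (3 * p.2) := by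
        calc r ^ (3 * (p.2 + p.1) + 2) ≤ r ^ (3 * (p.2 + p.1)) :=
            pow_le_pow_of_le_one hr0 hr1.le (by omega)
          _ = r ^ (3 * p.1) * r ^ (3 * p.2) := by
            rw [show 3 * (p.2 + p.1) = 3 * p.1 + 3 * p.2 by ring, pow_add]
      calc ‖A p * x ^ (3 * (p.2 + p.1) + 2)‖ = ‖A p‖ * ‖x ^ (3 * (p.2 + p.1) + 2)‖ := norm_mul _ _
        _ ≤ 1 * (r ^ (3 * p.1) * r ^ (3 * p.2)) := by
            exact mul_le_mul (hA p) (h1.trans h2) (norm_nonneg _) (by norm_num)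
        _ = r ^ (3 * p.1) * r ^ (3 * p.2) := one_mul _
    exact hs.hasSum



/-- For `|t| < 1`, `d/dt [(t²/2)·G(t)] = (t/(1−t³))·₂F₁(2/3,2/3;4/3;t³)`. -/
theorem primitive_two (t : ℂ) (ht : ‖t‖ < 1) :
    HasDerivAt (fun s : ℂ => s ^ 2 / 2 * kampeG s)
      (t / (1 - t ^ 3) * F21 (2/3) (2/3) (4/3) (t ^ 3)) t := by
  have heq : (fun s : ℂ => s ^ 2 / 2 * kampeG s)
      = fun s : ℂ => ∑' p : ℕ × ℕ, AA p * s ^ (3 * (p.2 + p.1) + 2) := by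
    funext s
    simp only [kampeG]
    rw [← tsum_mul_left]
    refine tsum_congr fun p => ?_
    simp only [AA]
    rw [pow_add]
    ring
  have h3n : ‖t ^ 3‖ < 1 := by
    rw [norm_pow]; exact pow_lt_one₀ (norm_nonneg t) ht (by norm_num)
  have hgeo : Summable fun m : ℕ => ‖(t ^ 3) ^ m‖ := by
    simpa [norm_pow] using summable_geometric_of_lt_one (norm_nonneg (t ^ 3)) h3n
  have hcnorm : ∀ n : ℕ, ‖cc n‖ ≤ 1 := by
    intro n
    rw [cc_eq, Complex.norm_real, Real.norm_eq_abs,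
      abs_of_nonneg (ccR_mem n).1]
    exact (ccR_mem n).2
  have hcs : Summable fun n : ℕ => ‖cc n * (t ^ 3) ^ n‖ := by
    refine Summable.of_nonneg_of_le (fun n => norm_nonneg _) (fun n => ?_)
      (summable_geometric_of_lt_one (norm_nonneg (t ^ 3)) h3n)
    rw [norm_mul, norm_pow]
    calc ‖cc n‖ * ‖t ^ 3‖ ^ n ≤ 1 * ‖t ^ 3‖ ^ n :=
          mul_le_mul_of_nonneg_right (hcnorm n) (by positivity)
      _ = ‖t ^ 3‖ ^ n := one_mul _
  have keyterm : ∀ p : ℕ × ℕ,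
      AA p * ((3 * (p.2 + p.1) + 2 : ℕ) : ℂ) * t ^ (3 * (p.2 + p.1) + 1)
        = t * ((t ^ 3) ^ p.1 * (cc p.2 * (t ^ 3) ^ p.2)) := by
    intro p
    have hpow : t ^ (3 * (p.2 + p.1) + 1) = t * ((t ^ 3) ^ p.1 * (t ^ 3) ^ p.2) := by
      rw [show 3 * (p.2 + p.1) + 1 = 3 * p.1 + 3 * p.2 + 1 by ring, pow_add, pow_add,
        pow_one, pow_mul, pow_mul]
      ring
    rw [key_identity p, hpow]
    ring
  have hval : (∑' p : ℕ × ℕ, AA p * ((3 * (p.2 + p.1) + 2 : ℕ) : ℂ) * t ^ (3 * (p.2 + p.1) + 1))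
      = t / (1 - t ^ 3) * F21 (2/3) (2/3) (4/3) (t ^ 3) := by
    calc (∑' p : ℕ × ℕ, AA p * ((3 * (p.2 + p.1) + 2 : ℕ) : ℂ) * t ^ (3 * (p.2 + p.1) + 1))
        = ∑' p : ℕ × ℕ, t * ((t ^ 3) ^ p.1 * (cc p.2 * (t ^ 3) ^ p.2)) := tsum_congr keyterm
      _ = t * ∑' p : ℕ × ℕ, ((t ^ 3) ^ p.1 * (cc p.2 * (t ^ 3) ^ p.2)) := tsum_mul_left
      _ = t * ((∑' m : ℕ, (t ^ 3) ^ m) * (∑' n : ℕ, cc n * (t ^ 3) ^ n)) := by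
          rw [tsum_mul_tsum_of_summable_norm hgeo hcs]
      _ = t / (1 - t ^ 3) * F21 (2/3) (2/3) (4/3) (t ^ 3) := by
          rw [tsum_geometric_of_norm_lt_one h3n,
            show F21 (2/3) (2/3) (4/3) (t ^ 3) = ∑' n : ℕ, cc n * (t ^ 3) ^ n from rfl]
          ring
  rw [heq]
  exact hval ▸ aux_deriv AA AA_norm_le ht
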